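/- For all integers n ≥ 2, p ∈ (0,1), and r,t > 0 with t finite: p(1 + ((1−p)/p)e^{−rt})^n + (1−p)(1−e^{−rt})^n > 1. -/

import Mathlib

theorem stmt_17 (n : ℕ) (hn : 2 ≤ n) (p r t : ℝ) (hp : 0 < p) (hp1 : p < 1)
    (hr : 0 < r) (ht : 0 < t) :
    1 < p * (1 + ((1 - p) / p) * Real.exp (-(r * t)))^n
      + (1 - p) * (1 - Real.exp (-(r * t)))^n := by
  set q : ℝ := Real.exp (-(r * t)) with hq
  have hq0 : 0 < q := Real.exp_pos _
  have hq1 : q < 1 := by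
    rw [hq]
    have : -(r * t) < 0 := by nlinarith
    calc Real.exp (-(r * t)) < Real.exp 0 := Real.exp_lt_exp.2 this
      _ = 1 := Real.exp_zero
  set a : ℝ := (1 - p) / p with ha
  have hpa : p * a = 1 - p := by rw [ha]; field_simp [hp.ne']
  have ha0 : 0 ≤ a := div_nonneg (by linarith) hp.le
  clear_value q a
  induction n, hn using Nat.le_induction with
  | base =>
      have e : p * (1 + a * q) ^ 2 + (1 - p) * (1 - q) ^ 2
          = 1 + (p * a - (1 - p)) * (2 * q) + (p * a) * (a * q ^ 2)
            + (1 - p) * q ^ 2 := by ring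
      rw [e, hpa]
      have h1 : 0 < (1 - p) * q ^ 2 := mul_pos (by linarith) (by positivity)
      have h2 : 0 ≤ (1 - p) * (a * q ^ 2) := mul_nonneg (by linarith) (by positivity)
      nlinarith
  | succ n hn ih =>
      have hmono : (1 - q) ^ n ≤ (1 + a * q) ^ n := by
        apply pow_le_pow_left₀ (by linarith) (by nlinarith)
      have hkey : 0 ≤ q * (1 - p) * ((1 + a * q) ^ n - (1 - q) ^ n) := by
        apply mul_nonneg (by nlinarith) (by linarith)
      rw [pow_succ, pow_succ]
      have e : p * ((1 + a * q) ^ n * (1 + a * q)) + (1 - p) * ((1 - q) ^ n * (1 - q))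
          = (p * (1 + a * q) ^ n + (1 - p) * (1 - q) ^ n)
            + (p * a) * (q * (1 + a * q) ^ n) - (1 - p) * (q * (1 - q) ^ n) := by ring
      rw [e, hpa]
      nlinarith [ih, hkey]
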